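/- Non-squeezing lemma for Hamiltonian flows with variable stopping time. Let Σ be a bounded subset of ℝ^m and let x, p : [−L, L] × Σ → ℝ^d be maps such that all partial derivatives of x and p in (s, z) up to order 2 exist and are bounded by a constant M on [−L, L] × Σ. Assume: (i) ∂ₛx(s; z) = 2 p(s; z) for all s, z; (ii) |p(s; z)| ≥ n₀ > 0 for all s, z; (iii) for every s, z and every j = 1, …, m one has p(s; z) · ∂_{z_j} x(s; z) = 0; (iv) there are constants 0 < d₁ ≤ d₂ such that d₁|z − z′| ≤ |p(s; z) − p(s; z′)| + |x(s; z) − x(s; z′)| ≤ d₂|z − z′| for all z, z′ ∈ Σ and all |s| ≤ L; (v) for every ε > 0 there is c(ε) > 0 such that |z − z′| ≥ ε implies |p(s; z) − p(s′; z′)| + |x(s; z) − x(s′; z′)| ≥ c(ε) for all |s|, |s′| ≤ L. Let S : Σ → [−L, L] be Lipschitz continuous with Lipschitz constant S₀. Then there exist positive constants c₁ and c₂, depending only on L, M, S₀, n₀, d₁, d₂, the diameter of Σ and the function c(·), such that c₁|z − z′| ≤ |p(S(z); z) − p(S(z′); z′)| + |x(S(z); z) − x(S(z′); z′)| ≤ c₂|z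 − z′| for all z, z′ ∈ Σ. -/

import Mathlib

open Set



/-- Second-order Taylor bound on a convex set. -/
lemma taylor2 {E F : Type*} [NormedAddCommGroup E] [NormedSpace ℝ E]
    [NormedAddCommGroup F] [NormedSpace ℝ F]
    (f : E → F) (hf : ContDiff ℝ 2 f) {K : Set E} (hK : Convex ℝ K) {C : ℝ}
    (hC : ∀ y ∈ K, ‖fderiv ℝ (fderiv ℝ f) y‖ ≤ C)
    {a b : E} (ha : a ∈ K) (hb : b ∈ K) :
    ‖f b - f a - fderiv ℝ f a (b - a)‖ ≤ C * ‖b - a‖ ^ 2 := by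
  have hf1 : ContDiff ℝ 1 (fderiv ℝ f) := hf.fderiv_right (by norm_num)
  have hdf : ∀ y, DifferentiableAt ℝ (fderiv ℝ f) y :=
    fun y => (hf1.differentiable one_ne_zero).differentiableAt
  have hfd : ∀ y, DifferentiableAt ℝ f y :=
    fun y => (hf.differentiable (by norm_num)).differentiableAt
  have hlip : ∀ y ∈ K, ‖fderiv ℝ f y - fderiv ℝ f a‖ ≤ C * ‖y - a‖ :=
    fun y hy => hK.norm_image_sub_le_of_norm_fderiv_le (fun u _ => hdf u) hC ha hy
  set g : E → F := fun y => f y - fderiv ℝ f a y with hg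
  have hgd : ∀ y, DifferentiableAt ℝ g y := fun y =>
    (hfd y).sub ((fderiv ℝ f a).differentiableAt)
  have hgder : ∀ y, fderiv ℝ g y = fderiv ℝ f y - fderiv ℝ f a := by
    intro y
    rw [hg]
    rw [fderiv_fun_sub (hfd y) (fderiv ℝ f a).differentiableAt, (fderiv ℝ f a).fderiv]
  have hseg : segment ℝ a b ⊆ K := hK.segment_subset ha hb
  have hbound : ∀ y ∈ segment ℝ a b, ‖fderiv ℝ g y‖ ≤ C * ‖b - a‖ := by
    intro y hy
    rw [hgder]
    have hyK := hseg hy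
    have h1 : ‖y - a‖ ≤ ‖b - a‖ := by
      rw [segment_eq_image'] at hy
      obtain ⟨θ, hθ, rfl⟩ := hy
      rw [add_sub_cancel_left, norm_smul]
      calc ‖θ‖ * ‖b - a‖ ≤ 1 * ‖b - a‖ := by
            apply mul_le_mul_of_nonneg_right _ (norm_nonneg _)
            rw [Real.norm_eq_abs, abs_le]; constructor <;> linarith [hθ.1, hθ.2]
        _ = ‖b - a‖ := one_mul _
    have h2 := hlip y hyK
    have hC0 : 0 ≤ C := le_trans (norm_nonneg (fderiv ℝ (fderiv ℝ f) a)) (hC a ha)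
    calc ‖fderiv ℝ f y - fderiv ℝ f a‖ ≤ C * ‖y - a‖ := h2
      _ ≤ C * ‖b - a‖ := mul_le_mul_of_nonneg_left h1 hC0
  have := Convex.norm_image_sub_le_of_norm_fderiv_le (f := g)
    (fun u _ => hgd u) hbound (convex_segment a b)
    (left_mem_segment ℝ a b) (right_mem_segment ℝ a b)
  have hgba : g b - g a = f b - f a - fderiv ℝ f a (b - a) := by
    simp only [hg, map_sub]; abel
  rw [hgba] at this
  calc ‖f b - f a - fderiv ℝ f a (b - a)‖ ≤ C * ‖b - a‖ * ‖b - a‖ := this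
    _ = C * ‖b - a‖ ^ 2 := by ring


set_option maxHeartbeats 2000000 in
/-- Non-squeezing lemma for Hamiltonian flows with variable stopping time. -/
theorem nonsqueezing_variable_stopping_time
    {d m : ℕ}
    (Sig : Set (EuclideanSpace ℝ (Fin m))) (hSigBdd : Bornology.IsBounded Sig)
    (L M n₀ S₀ d₁ d₂ : ℝ) (hL : 0 < L) (hM : 0 < M) (hn₀ : 0 < n₀)
    (hS₀ : 0 ≤ S₀) (hd₁ : 0 < d₁) (hd₁₂ : d₁ ≤ d₂)
    (x p : ℝ × EuclideanSpace ℝ (Fin m) → EuclideanSpace ℝ (Fin d))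
    (hx : ContDiff ℝ 2 x) (hp : ContDiff ℝ 2 p)
    -- all partial derivatives up to order 2 are bounded by M on [-L,L] × Σ
    (hxbdd : ∀ n : ℕ, 1 ≤ n → n ≤ 2 → ∀ s ∈ Icc (-L) L, ∀ z ∈ Sig,
      ‖iteratedFDeriv ℝ n x (s, z)‖ ≤ M)
    (hpbdd : ∀ n : ℕ, 1 ≤ n → n ≤ 2 → ∀ s ∈ Icc (-L) L, ∀ z ∈ Sig,
      ‖iteratedFDeriv ℝ n p (s, z)‖ ≤ M)
    -- (i) ∂ₛ x = 2 p
    (hflow : ∀ s ∈ Icc (-L) L, ∀ z ∈ Sig,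
      fderiv ℝ x (s, z) (1, 0) = (2 : ℝ) • p (s, z))
    -- (ii) |p| ≥ n₀ > 0
    (hpn₀ : ∀ s ∈ Icc (-L) L, ∀ z ∈ Sig, n₀ ≤ ‖p (s, z)‖)
    -- (iii) p · ∂_{z_j} x = 0
    (horth : ∀ s ∈ Icc (-L) L, ∀ z ∈ Sig, ∀ j : Fin m,
      inner ℝ (p (s, z)) (fderiv ℝ x (s, z) (0, EuclideanSpace.single j 1)) = (0 : ℝ))
    -- (iv) fixed-time non-squeezing estimates
    (hns : ∀ s ∈ Icc (-L) L, ∀ z ∈ Sig, ∀ z' ∈ Sig,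
      d₁ * ‖z - z'‖ ≤ ‖p (s, z) - p (s, z')‖ + ‖x (s, z) - x (s, z')‖ ∧
      ‖p (s, z) - p (s, z')‖ + ‖x (s, z) - x (s, z')‖ ≤ d₂ * ‖z - z'‖)
    -- (v) uniform separation of distinct trajectories
    (hsep : ∀ ε : ℝ, 0 < ε → ∃ c : ℝ, 0 < c ∧ ∀ z ∈ Sig, ∀ z' ∈ Sig,
      ∀ s ∈ Icc (-L) L, ∀ s' ∈ Icc (-L) L, ε ≤ ‖z - z'‖ →
      c ≤ ‖p (s, z) - p (s', z')‖ + ‖x (s, z) - x (s', z')‖)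
    -- Lipschitz stopping time S : Σ → [-L, L]
    (S : EuclideanSpace ℝ (Fin m) → ℝ)
    (hSrange : ∀ z ∈ Sig, S z ∈ Icc (-L) L)
    (hSlip : ∀ z ∈ Sig, ∀ z' ∈ Sig, |S z - S z'| ≤ S₀ * ‖z - z'‖) :
    ∃ c₁ : ℝ, 0 < c₁ ∧ ∃ c₂ : ℝ, 0 < c₂ ∧ ∀ z ∈ Sig, ∀ z' ∈ Sig,
      c₁ * ‖z - z'‖ ≤ ‖p (S z, z) - p (S z', z')‖ + ‖x (S z, z) - x (S z', z')‖ ∧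
      ‖p (S z, z) - p (S z', z')‖ + ‖x (S z, z) - x (S z', z')‖ ≤ c₂ * ‖z - z'‖ := by
  classical
  -- a compact convex set containing Icc (-L) L × Sig
  obtain ⟨R₀, hR₀⟩ := isBounded_iff_forall_norm_le.mp hSigBdd
  set R : ℝ := max R₀ 0 with hRdef
  have hR : 0 ≤ R := le_max_right _ _
  set K : Set (ℝ × EuclideanSpace ℝ (Fin m)) :=
    Icc (-L) L ×ˢ Metric.closedBall (0 : EuclideanSpace ℝ (Fin m)) R with hKdef
  have hKc : IsCompact K := isCompact_Icc.prod (isCompact_closedBall _ _)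
  have hKconv : Convex ℝ K := (convex_Icc _ _).prod (convex_closedBall _ _)
  have hmem : ∀ s ∈ Icc (-L) L, ∀ z ∈ Sig, ((s, z) : ℝ × _) ∈ K := by
    intro s hs z hz
    refine ⟨hs, ?_⟩
    rw [mem_closedBall_zero_iff]
    exact le_trans (hR₀ z hz) (le_max_left _ _)
  -- uniform bounds on K
  have hcx1 : Continuous (fderiv ℝ x) := hx.continuous_fderiv (by norm_num)
  have hcp1 : Continuous (fderiv ℝ p) := hp.continuous_fderiv (by norm_num)
  have hx2 : ContDiff ℝ 1 (fderiv ℝ x) := hx.fderiv_right (by norm_num)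
  have hcx2 : Continuous (fderiv ℝ (fderiv ℝ x)) := hx2.continuous_fderiv one_ne_zero
  obtain ⟨C1, hC1⟩ := hKc.exists_bound_of_continuousOn hp.continuous.continuousOn
  obtain ⟨C2, hC2⟩ := hKc.exists_bound_of_continuousOn hcx1.continuousOn
  obtain ⟨C3, hC3⟩ := hKc.exists_bound_of_continuousOn hcp1.continuousOn
  obtain ⟨C4, hC4⟩ := hKc.exists_bound_of_continuousOn (f := fderiv ℝ (fderiv ℝ x)) hcx2.continuousOn
  set C : ℝ := 1 ⊔ (C1 ⊔ C2 ⊔ C3 ⊔ C4) with hCdef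
  have hC1le : (1 : ℝ) ≤ C := le_max_left _ _
  have hCpos : 0 < C := lt_of_lt_of_le one_pos hC1le
  have hCp : ∀ q ∈ K, ‖p q‖ ≤ C := fun q hq =>
    le_trans (hC1 q hq) (by simp [hCdef, le_max_iff])
  have hCx1 : ∀ q ∈ K, ‖fderiv ℝ x q‖ ≤ C := fun q hq =>
    le_trans (hC2 q hq) (by simp [hCdef, le_max_iff])
  have hCp1 : ∀ q ∈ K, ‖fderiv ℝ p q‖ ≤ C := fun q hq =>
    le_trans (hC3 q hq) (by simp [hCdef, le_max_iff])
  have hCx2 : ∀ q ∈ K, ‖fderiv ℝ (fderiv ℝ x) q‖ ≤ C := fun q hq =>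
    le_trans (hC4 q hq) (by simp [hCdef, le_max_iff])
  -- Lipschitz bounds
  have hlipx : ∀ a ∈ K, ∀ b ∈ K, ‖x b - x a‖ ≤ C * ‖b - a‖ := fun a ha b hb =>
    hKconv.norm_image_sub_le_of_norm_fderiv_le
      (fun y _ => (hx.differentiable (by norm_num)).differentiableAt) hCx1 ha hb
  have hlipp : ∀ a ∈ K, ∀ b ∈ K, ‖p b - p a‖ ≤ C * ‖b - a‖ := fun a ha b hb =>
    hKconv.norm_image_sub_le_of_norm_fderiv_le
      (fun y _ => (hp.differentiable (by norm_num)).differentiableAt) hCp1 ha hb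
  have htay : ∀ a ∈ K, ∀ b ∈ K,
      ‖x b - x a - fderiv ℝ x a (b - a)‖ ≤ C * ‖b - a‖ ^ 2 :=
    fun a ha b hb => taylor2 x hx hKconv hCx2 ha hb
  -- orthogonality in all tangential directions
  have horthall : ∀ s ∈ Icc (-L) L, ∀ z ∈ Sig, ∀ w : EuclideanSpace ℝ (Fin m),
      inner ℝ (p (s, z)) (fderiv ℝ x (s, z) ((0 : ℝ), w)) = (0 : ℝ) := by
    intro s hs z hz w
    set φ : EuclideanSpace ℝ (Fin m) →L[ℝ] ℝ :=
      (innerSL ℝ (p (s, z))).comp ((fderiv ℝ x (s, z)).comp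
        (ContinuousLinearMap.inr ℝ ℝ (EuclideanSpace ℝ (Fin m)))) with hφdef
    have hφ0 : (φ : EuclideanSpace ℝ (Fin m) →ₗ[ℝ] ℝ) = 0 := by
      apply Module.Basis.ext (EuclideanSpace.basisFun (Fin m) ℝ).toBasis
      intro i
      have h := horth s hs z hz i
      simp only [OrthonormalBasis.coe_toBasis, EuclideanSpace.basisFun_apply,
        ContinuousLinearMap.coe_coe, hφdef, ContinuousLinearMap.comp_apply,
        ContinuousLinearMap.inr_apply, innerSL_apply_apply, LinearMap.zero_apply]
      exact h
    have hw : φ w = 0 := by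
      have := LinearMap.congr_fun hφ0 w
      simpa using this
    simpa [hφdef] using hw
  -- the constants
  set γ : ℝ := C ^ 3 * (S₀ + 1) ^ 2 with hγdef
  have hγpos : 0 < γ := by positivity
  set δ₀ : ℝ := d₁ * n₀ ^ 2 / (2 * γ) with hδ₀def
  have hδ₀pos : 0 < δ₀ := by positivity
  obtain ⟨c₀, hc₀pos, hc₀⟩ := hsep δ₀ hδ₀pos
  set D : ℝ := 2 * R + 1 with hDdef
  have hDpos : 0 < D := by positivity
  set c₁' : ℝ := d₁ * n₀ ^ 2 / (2 * (n₀ ^ 2 + C ^ 2)) with hc₁'def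
  have hc₁'pos : 0 < c₁' := by positivity
  refine ⟨min c₁' (c₀ / D), lt_min hc₁'pos (by positivity), 2 * C * (S₀ + 1),
    by positivity, ?_⟩
  intro z hz z' hz'
  set s : ℝ := S z with hsdef
  set s' : ℝ := S z' with hs'def
  have hs : s ∈ Icc (-L) L := hSrange z hz
  have hs' : s' ∈ Icc (-L) L := hSrange z' hz'
  set δ : ℝ := ‖z - z'‖ with hδdef
  have hδ0 : 0 ≤ δ := norm_nonneg _
  have hΔ : |s - s'| ≤ S₀ * δ := hSlip z hz z' hz'
  have hbK : ((s, z) : ℝ × _) ∈ K := hmem s hs z hz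
  have haK : ((s', z') : ℝ × _) ∈ K := hmem s' hs' z' hz'
  have ha'K : ((s', z) : ℝ × _) ∈ K := hmem s' hs' z hz
  have hsub : ((s, z) : ℝ × _) - (s', z') = (s - s', z - z') := rfl
  have hnab : ‖((s, z) : ℝ × _) - (s', z')‖ ≤ (S₀ + 1) * δ := by
    rw [hsub, Prod.norm_def]
    apply max_le
    · exact le_trans hΔ (by linarith [hδ0])
    · change δ ≤ _
      linarith [mul_nonneg hS₀ hδ0]
  have hnba' : ‖((s, z) : ℝ × _) - (s', z)‖ = |s - s'| := by
    have h0 : ((s, z) : ℝ × _) - (s', z) = (s - s', 0) := by simp [Prod.ext_iff]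
    rw [h0, Prod.norm_def]
    simp [Real.norm_eq_abs]
  -- upper bound
  have hupper : ‖p (s, z) - p (s', z')‖ + ‖x (s, z) - x (s', z')‖
      ≤ 2 * C * (S₀ + 1) * δ := by
    have h1 := hlipp _ haK _ hbK
    have h2 := hlipx _ haK _ hbK
    have h3 : C * ‖((s, z) : ℝ × _) - (s', z')‖ ≤ C * ((S₀ + 1) * δ) :=
      mul_le_mul_of_nonneg_left hnab (le_of_lt hCpos)
    have h4 : 2 * C * (S₀ + 1) * δ = C * ((S₀ + 1) * δ) + C * ((S₀ + 1) * δ) := by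
      ring
    linarith
  refine ⟨?_, hupper⟩
  -- Step A: control of the time shift
  have hu : n₀ ≤ ‖p (s', z')‖ := hpn₀ s' hs' z' hz'
  have huC : ‖p (s', z')‖ ≤ C := hCp _ haK
  have hrem := htay _ haK _ hbK
  have hsplit : fderiv ℝ x (s', z') (((s, z) : ℝ × _) - (s', z'))
      = (s - s') • ((2 : ℝ) • p (s', z')) + fderiv ℝ x (s', z') ((0 : ℝ), z - z') := by
    have hdecomp : (((s, z) : ℝ × _) - (s', z'))
        = (s - s') • ((1 : ℝ), (0 : EuclideanSpace ℝ (Fin m))) + ((0 : ℝ), z - z') := by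
      simp [Prod.ext_iff]
    rw [hdecomp, map_add, map_smul, hflow s' hs' z' hz']
  have e1 : (inner ℝ (p (s', z'))
        (fderiv ℝ x (s', z') (((s, z) : ℝ × _) - (s', z'))) : ℝ)
      = (s - s') * (2 * ‖p (s', z')‖ ^ 2) := by
    rw [hsplit, inner_add_right, horthall s' hs' z' hz' (z - z'),
      real_inner_smul_right, real_inner_smul_right, real_inner_self_eq_norm_sq]
    ring
  have e2 : (inner ℝ (p (s', z')) (x (s, z) - x (s', z')) : ℝ)
      = inner ℝ (p (s', z')) (x (s, z) - x (s', z')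
          - fderiv ℝ x (s', z') (((s, z) : ℝ × _) - (s', z')))
        + inner ℝ (p (s', z')) (fderiv ℝ x (s', z') (((s, z) : ℝ × _) - (s', z'))) := by
    simp only [inner_sub_right]
    ring
  have habs1 : |(inner ℝ (p (s', z')) (x (s, z) - x (s', z')) : ℝ)|
      ≤ ‖p (s', z')‖ * ‖x (s, z) - x (s', z')‖ := abs_real_inner_le_norm _ _
  have habs2 : |(inner ℝ (p (s', z')) (x (s, z) - x (s', z')
        - fderiv ℝ x (s', z') (((s, z) : ℝ × _) - (s', z'))) : ℝ)|
      ≤ ‖p (s', z')‖ * ‖x (s, z) - x (s', z')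
        - fderiv ℝ x (s', z') (((s, z) : ℝ × _) - (s', z'))‖ := abs_real_inner_le_norm _ _
  have heq : (s - s') * (2 * ‖p (s', z')‖ ^ 2)
      = (inner ℝ (p (s', z')) (x (s, z) - x (s', z')) : ℝ)
        - inner ℝ (p (s', z')) (x (s, z) - x (s', z')
          - fderiv ℝ x (s', z') (((s, z) : ℝ × _) - (s', z'))) := by
    rw [← e1]
    linarith [e2]
  have h6 : |s - s'| * (2 * ‖p (s', z')‖ ^ 2)
      ≤ ‖p (s', z')‖ * ‖x (s, z) - x (s', z')‖
        + ‖p (s', z')‖ * ‖x (s, z) - x (s', z')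
          - fderiv ℝ x (s', z') (((s, z) : ℝ × _) - (s', z'))‖ := by
    calc |s - s'| * (2 * ‖p (s', z')‖ ^ 2)
        = |(s - s') * (2 * ‖p (s', z')‖ ^ 2)| := by
          rw [abs_mul, abs_of_nonneg (by positivity : (0:ℝ) ≤ 2 * ‖p (s', z')‖ ^ 2)]
      _ ≤ |(inner ℝ (p (s', z')) (x (s, z) - x (s', z')) : ℝ)|
            + |(inner ℝ (p (s', z')) (x (s, z) - x (s', z')
              - fderiv ℝ x (s', z') (((s, z) : ℝ × _) - (s', z'))) : ℝ)| := by
          rw [heq]; exact abs_sub _ _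
      _ ≤ _ := add_le_add habs1 habs2
  have hn2 : n₀ ^ 2 ≤ ‖p (s', z')‖ ^ 2 := pow_le_pow_left₀ hn₀.le hu 2
  have hq1 : 2 * n₀ ^ 2 * |s - s'| ≤ |s - s'| * (2 * ‖p (s', z')‖ ^ 2) := by
    have hm := mul_le_mul_of_nonneg_left hn2 (abs_nonneg (s - s'))
    linarith
  have hq2 : ‖p (s', z')‖ * ‖x (s, z) - x (s', z')‖ ≤ C * ‖x (s, z) - x (s', z')‖ :=
    mul_le_mul_of_nonneg_right huC (norm_nonneg _)
  have hq4 : ‖x (s, z) - x (s', z')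
      - fderiv ℝ x (s', z') (((s, z) : ℝ × _) - (s', z'))‖ ≤ C * ((S₀ + 1) * δ) ^ 2 :=
    le_trans hrem (mul_le_mul_of_nonneg_left
      (pow_le_pow_left₀ (norm_nonneg _) hnab 2) hCpos.le)
  have hq3 : ‖p (s', z')‖ * ‖x (s, z) - x (s', z')
      - fderiv ℝ x (s', z') (((s, z) : ℝ × _) - (s', z'))‖
      ≤ C * (C * ((S₀ + 1) * δ) ^ 2) := by
    calc ‖p (s', z')‖ * ‖x (s, z) - x (s', z')
        - fderiv ℝ x (s', z') (((s, z) : ℝ × _) - (s', z'))‖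
        ≤ C * ‖x (s, z) - x (s', z')
          - fderiv ℝ x (s', z') (((s, z) : ℝ × _) - (s', z'))‖ :=
          mul_le_mul_of_nonneg_right huC (norm_nonneg _)
      _ ≤ C * (C * ((S₀ + 1) * δ) ^ 2) := mul_le_mul_of_nonneg_left hq4 hCpos.le
  have hstepA : 2 * n₀ ^ 2 * |s - s'|
      ≤ C * ‖x (s, z) - x (s', z')‖ + C ^ 2 * (S₀ + 1) ^ 2 * δ ^ 2 := by
    have hring : C * (C * ((S₀ + 1) * δ) ^ 2) = C ^ 2 * (S₀ + 1) ^ 2 * δ ^ 2 := by ring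
    linarith
  -- Step B: comparison with fixed-time estimate
  have hstepB : d₁ * δ ≤ (‖p (s, z) - p (s', z')‖ + ‖x (s, z) - x (s', z')‖)
      + 2 * C * |s - s'| := by
    have hfix : d₁ * δ ≤ ‖p (s', z) - p (s', z')‖ + ‖x (s', z) - x (s', z')‖ :=
      (hns s' hs' z hz z' hz').1
    have h1 : ‖p (s, z) - p (s', z)‖ ≤ C * |s - s'| := by
      have h := hlipp _ ha'K _ hbK
      rwa [hnba'] at h
    have h2 : ‖x (s, z) - x (s', z)‖ ≤ C * |s - s'| := by
      have h := hlipx _ ha'K _ hbK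
      rwa [hnba'] at h
    have h3 : ‖p (s', z) - p (s', z')‖
        ≤ ‖p (s', z) - p (s, z)‖ + ‖p (s, z) - p (s', z')‖ :=
      norm_sub_le_norm_sub_add_norm_sub _ _ _
    have h4 : ‖x (s', z) - x (s', z')‖
        ≤ ‖x (s', z) - x (s, z)‖ + ‖x (s, z) - x (s', z')‖ :=
      norm_sub_le_norm_sub_add_norm_sub _ _ _
    rw [norm_sub_rev (p (s', z)) (p (s, z))] at h3
    rw [norm_sub_rev (x (s', z)) (x (s, z))] at h4
    linarith
  -- combine
  have hT0p : 0 ≤ ‖p (s, z) - p (s', z')‖ := norm_nonneg _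
  have hT0x : 0 ≤ ‖x (s, z) - x (s', z')‖ := norm_nonneg _
  have hkey : d₁ * n₀ ^ 2 * δ
      ≤ (n₀ ^ 2 + C ^ 2) * (‖p (s, z) - p (s', z')‖ + ‖x (s, z) - x (s', z')‖)
        + γ * δ ^ 2 := by
    have hA' : C * (2 * n₀ ^ 2 * |s - s'|)
        ≤ C * (C * ‖x (s, z) - x (s', z')‖ + C ^ 2 * (S₀ + 1) ^ 2 * δ ^ 2) :=
      mul_le_mul_of_nonneg_left hstepA hCpos.le
    have hB' : n₀ ^ 2 * (d₁ * δ)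
        ≤ n₀ ^ 2 * ((‖p (s, z) - p (s', z')‖ + ‖x (s, z) - x (s', z')‖)
          + 2 * C * |s - s'|) :=
      mul_le_mul_of_nonneg_left hstepB (by positivity)
    rw [hγdef]
    have hnn : 0 ≤ C ^ 2 * ‖p (s, z) - p (s', z')‖ := by positivity
    linarith [hA', hB', hnn]
  rcases le_or_gt δ δ₀ with hcase | hcase
  · -- small δ
    have h2 : γ * δ₀ = d₁ * n₀ ^ 2 / 2 := by
      rw [hδ₀def]; field_simp
    have h1 : γ * δ ^ 2 ≤ (d₁ * n₀ ^ 2 / 2) * δ := by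
      have h0 : γ * δ ≤ γ * δ₀ := mul_le_mul_of_nonneg_left hcase hγpos.le
      calc γ * δ ^ 2 = (γ * δ) * δ := by ring
        _ ≤ (γ * δ₀) * δ := mul_le_mul_of_nonneg_right h0 hδ0
        _ = (d₁ * n₀ ^ 2 / 2) * δ := by rw [h2]
    have h5 : (d₁ * n₀ ^ 2 / 2) * δ
        ≤ (n₀ ^ 2 + C ^ 2) * (‖p (s, z) - p (s', z')‖ + ‖x (s, z) - x (s', z')‖) := by
      linarith [hkey, h1]
    have hfin : c₁' * δ ≤ ‖p (s, z) - p (s', z')‖ + ‖x (s, z) - x (s', z')‖ := by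
      rw [hc₁'def, div_mul_eq_mul_div, div_le_iff₀ (by positivity)]
      linarith [h5]
    calc min c₁' (c₀ / D) * δ ≤ c₁' * δ :=
          mul_le_mul_of_nonneg_right (min_le_left _ _) hδ0
      _ ≤ _ := hfin
  · -- large δ
    have hδD : δ ≤ D := by
      have h1 : ‖z - z'‖ ≤ ‖z‖ + ‖z'‖ := norm_sub_le _ _
      have h2 : ‖z‖ ≤ R := le_trans (hR₀ z hz) (le_max_left _ _)
      have h3 : ‖z'‖ ≤ R := le_trans (hR₀ z' hz') (le_max_left _ _)
      rw [hδdef, hDdef]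
      linarith
    have hT : c₀ ≤ ‖p (s, z) - p (s', z')‖ + ‖x (s, z) - x (s', z')‖ :=
      hc₀ z hz z' hz' s hs s' hs' (le_of_lt hcase)
    calc min c₁' (c₀ / D) * δ ≤ (c₀ / D) * δ :=
          mul_le_mul_of_nonneg_right (min_le_right _ _) hδ0
      _ ≤ (c₀ / D) * D := mul_le_mul_of_nonneg_left hδD (by positivity)
      _ = c₀ := by field_simp
      _ ≤ _ := hT
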